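/- arXiv:1602.00255 — 3 statements merged into one kernel-verified Lean document; each statement's English description precedes it below -/
import Mathlib

section
/- The function y ↦ (tanh y + y*(1 - tanh²y)) / (2*sqrt(y*tanh y)) is strictly decreasing on (0, ∞). -/
open Real Set

/-- The function `y ↦ (tanh y + y(1 - tanh² y)) / (2 √(y tanh y))` is strictly
decreasing on `(0, ∞)`. -/
theorem stmt1 : StrictAntiOn
    (fun y : ℝ =>
      (Real.tanh y + y * (1 - Real.tanh y ^ 2)) / (2 * Real.sqrt (y * Real.tanh y)))
    (Set.Ioi 0) := by
  have tanh_pos : ∀ y : ℝ, 0 < y → 0 < Real.tanh y := by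
    intro y hy
    rw [Real.tanh_eq_sinh_div_cosh]
    exact div_pos (Real.sinh_pos_iff.mpr hy) (Real.cosh_pos y)
  have hid : ∀ y : ℝ, (1 : ℝ) / Real.cosh y ^ 2 = 1 - Real.tanh y ^ 2 := by
    intro y
    rw [Real.tanh_eq_sinh_div_cosh]
    have hc := (Real.cosh_pos y).ne'
    field_simp
    linarith [Real.cosh_sq_sub_sinh_sq y]
  have ht : ∀ y : ℝ, HasDerivAt Real.tanh (1 - Real.tanh y ^ 2) y := by
    intro y
    have h := (Real.hasDerivAt_sinh y).div (Real.hasDerivAt_cosh y) (Real.cosh_pos y).ne'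
    have e : (Real.sinh / Real.cosh) = Real.tanh := by
      funext x; rw [Pi.div_apply, Real.tanh_eq_sinh_div_cosh]
    rw [e] at h
    refine h.congr_deriv ?_
    rw [← hid y]
    have hc := (Real.cosh_pos y).ne'
    field_simp
    ring_nf
    nlinarith [Real.cosh_sq_sub_sinh_sq y]
  -- key derivative computation
  have key : ∀ y ∈ Set.Ioi (0:ℝ), HasDerivAt
      (fun y : ℝ =>
        (Real.tanh y + y * (1 - Real.tanh y ^ 2)) / (2 * Real.sqrt (y * Real.tanh y)))
      (((1 - Real.tanh y ^ 2 + (1 * (1 - Real.tanh y ^ 2) + y * (0 - 2 * Real.tanh y ^ 1 * (1 - Real.tanh y ^ 2)))) * (2 * Real.sqrt (y * Real.tanh y)) - (Real.tanh y + y * (1 - Real.tanh y ^ 2)) * (2 * (1 / (2 * Real.sqrt (y * Real.tanh y)) * (1 * Real.tanh y + y * (1 - Real.tanh y ^ 2))))) / (2 * Real.sqrt (y * Real.tanh y)) ^ 2) y := by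
    intro y hy
    rw [Set.mem_Ioi] at hy
    have htp := tanh_pos y hy
    have hmul : 0 < y * Real.tanh y := mul_pos hy htp
    have hu : HasDerivAt (fun y : ℝ => y * Real.tanh y) (1 * Real.tanh y + y * (1 - Real.tanh y ^ 2)) y :=
      (hasDerivAt_id y).mul (ht y)
    have hsq : HasDerivAt (fun y : ℝ => Real.sqrt (y * Real.tanh y))
        (1 / (2 * Real.sqrt (y * Real.tanh y)) * (1 * Real.tanh y + y * (1 - Real.tanh y ^ 2))) y :=
      (Real.hasDerivAt_sqrt hmul.ne').comp y hu
    have hN : HasDerivAt (fun y : ℝ => Real.tanh y + y * (1 - Real.tanh y ^ 2))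
        (1 - Real.tanh y ^ 2 + (1 * (1 - Real.tanh y ^ 2) + y * (0 - 2 * Real.tanh y ^ 1 * (1 - Real.tanh y ^ 2)))) y :=
      (ht y).add ((hasDerivAt_id y).mul ((hasDerivAt_const y (1:ℝ)).sub ((ht y).pow 2)))
    have hden_ne : 2 * Real.sqrt (y * Real.tanh y) ≠ 0 := by positivity
    exact hN.div (hsq.const_mul 2) hden_ne
  apply strictAntiOn_of_deriv_neg (convex_Ioi 0)
  · intro y hy
    exact (key y hy).continuousAt.continuousWithinAt
  · intro y hy
    rw [interior_Ioi] at hy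
    rw [(key y hy).deriv]
    have hy' := hy
    rw [Set.mem_Ioi] at hy'
    have htp := tanh_pos y hy'
    have ht1 : Real.tanh y < 1 := by
      nlinarith [hid y, Real.cosh_pos y, sq_nonneg (Real.cosh y), one_div_pos.mpr (pow_pos (Real.cosh_pos y) 2)]
    have hmul : 0 < y * Real.tanh y := mul_pos hy' htp
    have hr : 0 < Real.sqrt (y * Real.tanh y) := Real.sqrt_pos.mpr hmul
    have hr2 : Real.sqrt (y * Real.tanh y) ^ 2 = y * Real.tanh y := Real.sq_sqrt hmul.le
    set t := Real.tanh y with htdef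
    set r := Real.sqrt (y * t) with hrdef
    apply div_neg_of_neg_of_pos
    · have hrne : r ≠ 0 := hr.ne'
      have heq : (1 - t ^ 2 + (1 * (1 - t ^ 2) + y * (0 - 2 * t ^ 1 * (1 - t ^ 2)))) * (2 * r) - (t + y * (1 - t ^ 2)) * (2 * (1 / (2 * r) * (1 * t + y * (1 - t ^ 2)))) = (2 * (y * t) * (2 * (1 - t^2) - 2 * y * t * (1 - t^2)) - (t + y * (1 - t^2))^2) / r := by
        field_simp
        linear_combination (2 * (1 - t ^ 2 + (1 - t ^ 2 + y * (0 - t * (1 - t ^ 2) * 2)))) * hr2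
      rw [heq]
      apply div_neg_of_neg_of_pos _ hr
      nlinarith [sq_nonneg (t - y * (1 - t^2)), mul_pos (mul_pos (mul_pos hy' hy') (mul_pos htp htp)) (sub_pos.mpr (by nlinarith : t^2 < 1))]
    · positivity
end

section
/- The function g(y) = sqrt(y * tanh y) is strictly subadditive on positive reals: for all a, b > 0, g(a + b) < g(a) + g(b). -/
open Real

set_option maxHeartbeats 1000000

lemma tanh_formula (x : ℝ) :
    Real.tanh x = (Real.exp (2*x) - 1) / (Real.exp (2*x) + 1) := by
  have h1 : Real.exp x ≠ 0 := (Real.exp_pos x).ne'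
  have h2 : Real.exp x + Real.exp (-x) ≠ 0 := by positivity
  have h3 : Real.exp (2*x) + 1 ≠ 0 := by positivity
  have e2 : Real.exp (2*x) = Real.exp x * Real.exp x := by
    rw [← Real.exp_add]; ring_nf
  have en : Real.exp (-x) = (Real.exp x)⁻¹ := Real.exp_neg x
  rw [Real.tanh_eq_sinh_div_cosh, Real.sinh_eq, Real.cosh_eq, e2, en]
  field_simp

lemma tanh_pos' {x : ℝ} (hx : 0 < x) : 0 < Real.tanh x := by
  rw [tanh_formula]
  have : (1:ℝ) < Real.exp (2*x) := by
    rw [show (1:ℝ) = Real.exp 0 by simp]; exact Real.exp_lt_exp.2 (by linarith)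
  have h3 : (0:ℝ) < Real.exp (2*x) + 1 := by positivity
  apply div_pos (by linarith) h3

lemma tanh_lt_one' (x : ℝ) : Real.tanh x < 1 := by
  rw [tanh_formula]
  have h3 : (0:ℝ) < Real.exp (2*x) + 1 := by positivity
  rw [div_lt_one h3]; linarith

lemma tanh_add' (a b : ℝ) :
    Real.tanh (a + b) = (Real.tanh a + Real.tanh b) / (1 + Real.tanh a * Real.tanh b) := by
  have hP : (0:ℝ) < Real.exp (2*a) := Real.exp_pos _
  have hQ : (0:ℝ) < Real.exp (2*b) := Real.exp_pos _
  have hden : (0:ℝ) < 1 + Real.tanh a * Real.tanh b := by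
    nlinarith [tanh_lt_one' a, tanh_lt_one' b, tanh_lt_one' (-a), tanh_lt_one' (-b),
      Real.tanh_neg a, Real.tanh_neg b]
  rw [tanh_formula, tanh_formula] at hden ⊢
  rw [tanh_formula, show 2*(a+b) = 2*a + 2*b by ring, Real.exp_add]
  rw [eq_div_iff hden.ne']
  field_simp
  ring

lemma keyB {a : ℝ} (ha : 0 < a) : a * (1 - Real.tanh a)^2 < Real.tanh a := by
  have hexp : 1 + 2*a < Real.exp (2*a) := by
    have := Real.add_one_lt_exp (show 2*a ≠ 0 by positivity)
    linarith
  rw [tanh_formula]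
  have hP1 : (0:ℝ) < Real.exp (2*a) + 1 := by positivity
  rw [show 1 - (Real.exp (2*a) - 1) / (Real.exp (2*a) + 1) = 2 / (Real.exp (2*a) + 1) by
    field_simp; ring]
  rw [div_pow, lt_div_iff₀ hP1, mul_comm a, mul_assoc, div_mul_eq_mul_div,
    div_lt_iff₀ (by positivity : (0:ℝ) < (Real.exp (2*a)+1)^2)]
  have hfin : 4*a < Real.exp (2*a)^2 - 1 := by
    nlinarith [mul_pos (show (0:ℝ) < Real.exp (2*a) - 1 - 2*a by linarith)
      (show (0:ℝ) < Real.exp (2*a) + 1 + 2*a by linarith), sq_nonneg a]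
  nlinarith [hfin, hP1]

lemma keyC {b : ℝ} (hb : 0 < b) : Real.tanh b < b * (1 + Real.tanh b)^2 := by
  have hexp : 1 - 2*b < Real.exp (-(2*b)) := by
    have := Real.add_one_lt_exp (show -(2*b) ≠ 0 by simp; positivity)
    linarith
  have hq : Real.exp (-(2*b)) * Real.exp (2*b) = 1 := by rw [← Real.exp_add]; simp
  have hQ : (0:ℝ) < Real.exp (2*b) := Real.exp_pos _
  rw [tanh_formula]
  have hP1 : (0:ℝ) < Real.exp (2*b) + 1 := by positivity
  rw [show 1 + (Real.exp (2*b) - 1) / (Real.exp (2*b) + 1) = 2*Real.exp (2*b) / (Real.exp (2*b) + 1) by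
    field_simp; ring]
  rw [div_pow, div_lt_iff₀ hP1, mul_comm b, mul_assoc, div_mul_eq_mul_div,
    lt_div_iff₀ (by positivity : (0:ℝ) < (Real.exp (2*b)+1)^2)]
  have hq1 : Real.exp (-(2*b)) < 1 := by
    have := Real.exp_lt_exp.2 (show -(2*b) < 0 by linarith)
    simpa using this
  have h4b : 1 - Real.exp (-(2*b))^2 < 4*b := by nlinarith [hexp, hq1, hb]
  have hq2 : Real.exp (-(2*b))^2 * Real.exp (2*b)^2 = 1 := by
    rw [← mul_pow, hq, one_pow]
  have hfin : Real.exp (2*b)^2 - 1 < 4*b*Real.exp (2*b)^2 := by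
    nlinarith [h4b, hq2, mul_pos hQ hQ]
  nlinarith [hfin, hP1]

/-- `g(y) = √(y tanh y)` is strictly subadditive on positive reals. -/
theorem stmt2 (a b : ℝ) (ha : 0 < a) (hb : 0 < b) :
    Real.sqrt ((a + b) * Real.tanh (a + b)) <
      Real.sqrt (a * Real.tanh a) + Real.sqrt (b * Real.tanh b) := by
  set ta := Real.tanh a with hta_def
  set tb := Real.tanh b with htb_def
  have hta0 : 0 < ta := tanh_pos' ha
  have htb0 : 0 < tb := tanh_pos' hb
  have hta1 : ta < 1 := tanh_lt_one' a
  have htb1 : tb < 1 := tanh_lt_one' b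
  have hden : (0:ℝ) < 1 + ta*tb := by nlinarith
  set u := Real.sqrt (a*tb) with hu_def
  set v := Real.sqrt (b*ta) with hv_def
  have hu0 : 0 < u := Real.sqrt_pos.2 (by positivity)
  have hv0 : 0 < v := Real.sqrt_pos.2 (by positivity)
  have hu2 : u^2 = a*tb := Real.sq_sqrt (by positivity)
  have hv2 : v^2 = b*ta := Real.sq_sqrt (by positivity)
  have hS : (0:ℝ) < Real.sqrt (a*ta) + Real.sqrt (b*tb) := by
    have h1 : 0 < Real.sqrt (a*ta) := Real.sqrt_pos.2 (by positivity)
    have h2 : 0 ≤ Real.sqrt (b*tb) := Real.sqrt_nonneg _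
    linarith
  rw [tanh_add' a b]
  rw [Real.sqrt_lt' hS]
  have hsuv : Real.sqrt (a*ta) * Real.sqrt (b*tb) = u*v := by
    rw [hu_def, hv_def, ← Real.sqrt_mul (by positivity), ← Real.sqrt_mul (by positivity)]
    ring_nf
  have hsu2 : Real.sqrt (a*ta)^2 = a*ta := Real.sq_sqrt (by positivity)
  have hsv2 : Real.sqrt (b*tb)^2 = b*tb := Real.sq_sqrt (by positivity)
  rw [add_sq, hsu2, hsv2, mul_assoc 2, hsuv, ← hta_def, ← htb_def, ← mul_div_assoc]
  rw [div_lt_iff₀ hden]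
  -- key strict inequalities
  have hB := mul_lt_mul_of_pos_right (keyB ha) htb0
  have hC := mul_lt_mul_of_pos_left (keyC hb) hta0
  have hB' := mul_lt_mul_of_pos_right (keyB hb) hta0
  have hC' := mul_lt_mul_of_pos_left (keyC ha) htb0
  simp only [← hta_def, ← htb_def] at hB hC hB' hC'
  clear_value ta tb u v
  have h1 : u*(1-ta) < v*(1+tb) := by
    refine lt_of_pow_lt_pow_left₀ 2 (by positivity) ?_
    have e1 : (u*(1-ta))^2 = a*tb*(1-ta)^2 := by rw [mul_pow, hu2]
    have e2 : (v*(1+tb))^2 = b*ta*(1+tb)^2 := by rw [mul_pow, hv2]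
    rw [e1, e2]
    calc a*tb*(1-ta)^2 = a*(1-ta)^2*tb := by ring
      _ < ta*tb := hB
      _ < ta*(b*(1+tb)^2) := hC
      _ = b*ta*(1+tb)^2 := by ring
  have h2 : v*(1-tb) < u*(1+ta) := by
    refine lt_of_pow_lt_pow_left₀ 2 (by positivity) ?_
    have e1 : (v*(1-tb))^2 = b*ta*(1-tb)^2 := by rw [mul_pow, hv2]
    have e2 : (u*(1+ta))^2 = a*tb*(1+ta)^2 := by rw [mul_pow, hu2]
    rw [e1, e2]
    calc b*ta*(1-tb)^2 = b*(1-tb)^2*ta := by ring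
      _ < tb*ta := hB'
      _ < tb*(a*(1+ta)^2) := hC'
      _ = a*tb*(1+ta)^2 := by ring
  have p1 : 0 < (ta*u+tb*v) - (u-v) := by linarith [h1]
  have p2 : 0 < (ta*u+tb*v) + (u-v) := by linarith [h2]
  have hdiff : (u-v)^2 < (ta*u+tb*v)^2 := by nlinarith [mul_pos p1 p2, p1, p2]
  have keyeq : (a*ta + 2*(u*v) + b*tb)*(1+ta*tb) - (a+b)*(ta+tb)
      = (ta*u+tb*v)^2 - (u-v)^2 := by
    linear_combination (1-ta^2)*hu2 + (1-tb^2)*hv2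
  linarith [hdiff, keyeq]
end

section
/- Fix x > 0 and let g(y) = sqrt(y * tanh y). The function φ(λ) = (g(x*(1+λ)) − g(x*λ))/sqrt(x) − sqrt(tanh x) defined for λ ≥ 0 satisfies φ(0) = 0 and φ'(λ) = sqrt(x) * (g'(x*(1+λ)) − g'(x*λ)) < 0 for all λ > 0; consequently φ(λ) < 0 for all λ > 0. -/
lemma my_hasDerivAt_tanh (y : ℝ) : HasDerivAt Real.tanh (1 - Real.tanh y ^ 2) y := by
  have hc := Real.cosh_pos y
  have h : HasDerivAt (fun z => Real.sinh z / Real.cosh z)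
      ((Real.cosh y * Real.cosh y - Real.sinh y * Real.sinh y) / Real.cosh y ^ 2) y :=
    (Real.hasDerivAt_sinh y).div (Real.hasDerivAt_cosh y) hc.ne'
  have he : (fun z => Real.sinh z / Real.cosh z) = Real.tanh := by
    funext z; rw [Real.tanh_eq_sinh_div_cosh]
  rw [he] at h
  convert h using 1
  rw [Real.tanh_eq_sinh_div_cosh]
  field_simp

lemma my_tanh_pos {y : ℝ} (hy : 0 < y) : 0 < Real.tanh y := by
  rw [Real.tanh_eq_sinh_div_cosh]
  exact div_pos (Real.sinh_pos_iff.2 hy) (Real.cosh_pos y)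

lemma my_tanh_lt_one (y : ℝ) : Real.tanh y < 1 := by
  rw [Real.tanh_eq_sinh_div_cosh]
  exact (div_lt_one (Real.cosh_pos y)).2 (Real.sinh_lt_cosh y)

lemma my_hasDerivAt_h (y : ℝ) :
    HasDerivAt (fun z => z * Real.tanh z) (Real.tanh y + y * (1 - Real.tanh y ^ 2)) y := by
  have := (hasDerivAt_id y).mul (my_hasDerivAt_tanh y)
  exact this.congr_deriv (by simp)

lemma my_F_anti : StrictAntiOn
    (fun z => (Real.tanh z + z * (1 - Real.tanh z ^ 2)) ^ 2 / (4 * (z * Real.tanh z)))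
    (Set.Ioi (0:ℝ)) := by
  have hF : ∀ y : ℝ, 0 < y → HasDerivAt
      (fun z => (Real.tanh z + z * (1 - Real.tanh z ^ 2)) ^ 2 / (4 * (z * Real.tanh z)))
      ((4 * (Real.tanh y + y * (1 - Real.tanh y ^ 2)) *
        (2 * (y * Real.tanh y) *
            (2 * (1 - Real.tanh y ^ 2) - 2 * y * Real.tanh y * (1 - Real.tanh y ^ 2)) -
          (Real.tanh y + y * (1 - Real.tanh y ^ 2)) ^ 2)) /
        (4 * (y * Real.tanh y)) ^ 2) y := by
    intro y hy
    have ht := my_tanh_pos hy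
    have hne : (4:ℝ) * (y * Real.tanh y) ≠ 0 := by positivity
    have h1 := (my_hasDerivAt_tanh y).pow 2
    have h2 := h1.const_sub 1
    have h3 := (hasDerivAt_id y).mul h2
    have h4 := (my_hasDerivAt_tanh y).add h3
    have h5 := h4.pow 2
    have h6 := (my_hasDerivAt_h y).const_mul 4
    have h7 := h5.div h6 hne
    refine h7.congr_deriv ?_
    norm_num
    ring
  apply strictAntiOn_of_deriv_neg (convex_Ioi 0)
  · intro y hy
    exact (hF y hy).continuousAt.continuousWithinAt
  · intro y hy
    rw [interior_Ioi] at hy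
    rw [(hF y hy).deriv]
    have hy' : 0 < y := hy
    have ht := my_tanh_pos hy'
    have ht1 := my_tanh_lt_one y
    have hs : 0 < 1 - Real.tanh y ^ 2 := by nlinarith
    set t := Real.tanh y
    set s := 1 - t ^ 2
    apply div_neg_of_neg_of_pos
    · have hh' : 0 < t + y * s := by positivity
      have hinner : 2 * (y * t) * (2 * s - 2 * y * t * s) - (t + y * s) ^ 2 < 0 := by
        nlinarith [sq_nonneg (t - y * s), mul_pos (mul_pos (mul_pos hy' hy') (mul_pos ht ht)) hs]
      exact mul_neg_of_pos_of_neg (by positivity) hinner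
    · positivity

/-- For fixed `x > 0` and `g(y) = √(y tanh y)`, the function
`φ(λ) = (g(x(1+λ)) - g(xλ))/√x - √(tanh x)` satisfies `φ(0) = 0`,
`φ'(λ) = √x (g'(x(1+λ)) - g'(xλ)) < 0` for `λ > 0`, and hence `φ(λ) < 0` for `λ > 0`. -/
theorem stmt7 (x : ℝ) (hx : 0 < x) (g g' φ : ℝ → ℝ)
    (hg : ∀ y, g y = Real.sqrt (y * Real.tanh y))
    (hg' : ∀ y, g' y =
      (Real.tanh y + y * (1 - Real.tanh y ^ 2)) / (2 * Real.sqrt (y * Real.tanh y)))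
    (hφ : ∀ l, φ l = (g (x * (1 + l)) - g (x * l)) / Real.sqrt x - Real.sqrt (Real.tanh x)) :
    φ 0 = 0 ∧ ∀ l, 0 < l →
      HasDerivAt φ (Real.sqrt x * (g' (x * (1 + l)) - g' (x * l))) l ∧
      Real.sqrt x * (g' (x * (1 + l)) - g' (x * l)) < 0 ∧
      φ l < 0 := by
  have hsx : (0:ℝ) < Real.sqrt x := Real.sqrt_pos.2 hx
  have hgfun : g = fun y => Real.sqrt (y * Real.tanh y) := funext hg
  have hφfun : φ = fun l =>
      (g (x * (1 + l)) - g (x * l)) / Real.sqrt x - Real.sqrt (Real.tanh x) := funext hφ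
  -- φ 0 = 0
  have hφ0 : φ 0 = 0 := by
    rw [hφ 0, hg, hg]
    simp only [mul_zero, add_zero, mul_one, zero_mul, Real.sqrt_zero]
    rw [Real.sqrt_mul hx.le, sub_zero, mul_comm, mul_div_assoc, div_self hsx.ne', mul_one, sub_self]
  -- g has derivative g' at positive points
  have hgderiv : ∀ u : ℝ, 0 < u → HasDerivAt g (g' u) u := by
    intro u hu
    have ht := my_tanh_pos hu
    have hne : u * Real.tanh u ≠ 0 := (mul_pos hu ht).ne'
    have := (my_hasDerivAt_h u).sqrt hne
    rw [hgfun, hg' u]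
    exact this
  -- g' is positive at positive points
  have hg'pos : ∀ u : ℝ, 0 < u → 0 < g' u := by
    intro u hu
    have ht := my_tanh_pos hu
    have ht1 := my_tanh_lt_one u
    have hs : 0 < 1 - Real.tanh u ^ 2 := by nlinarith
    rw [hg' u]
    apply div_pos (by positivity)
    have : 0 < u * Real.tanh u := mul_pos hu ht
    positivity
  -- g' is strictly decreasing on (0, ∞)
  have hg'anti : ∀ a b : ℝ, 0 < a → a < b → g' b < g' a := by
    intro a b ha hab
    have hb : 0 < b := ha.trans hab
    have key : ∀ u : ℝ, 0 < u → (g' u) ^ 2 =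
        (Real.tanh u + u * (1 - Real.tanh u ^ 2)) ^ 2 / (4 * (u * Real.tanh u)) := by
      intro u hu
      have ht := my_tanh_pos hu
      have hh : (0:ℝ) ≤ u * Real.tanh u := (mul_pos hu ht).le
      rw [hg' u, div_pow, mul_pow, Real.sq_sqrt hh]
      norm_num
    have hsq : (g' b) ^ 2 < (g' a) ^ 2 := by
      rw [key a ha, key b hb]
      exact my_F_anti (Set.mem_Ioi.2 ha) (Set.mem_Ioi.2 hb) hab
    nlinarith [hg'pos a ha, hg'pos b hb]
  -- derivative of φ at positive points
  have hφderiv : ∀ l : ℝ, 0 < l →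
      HasDerivAt φ (Real.sqrt x * (g' (x * (1 + l)) - g' (x * l))) l := by
    intro l hl
    have hb : 0 < x * (1 + l) := by positivity
    have ha : 0 < x * l := mul_pos hx hl
    have hin1 : HasDerivAt (fun l : ℝ => x * (1 + l)) x l := by
      simpa using ((hasDerivAt_id l).const_add 1).const_mul x
    have hin2 : HasDerivAt (fun l : ℝ => x * l) x l := by
      simpa using (hasDerivAt_id l).const_mul x
    have hc1 : HasDerivAt (fun l : ℝ => g (x * (1 + l))) (g' (x * (1 + l)) * x) l :=
      (hgderiv _ hb).comp l hin1
    have hc2 : HasDerivAt (fun l : ℝ => g (x * l)) (g' (x * l) * x) l :=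
      (hgderiv _ ha).comp l hin2
    have hsub := ((hc1.sub hc2).div_const (Real.sqrt x)).sub_const (Real.sqrt (Real.tanh x))
    rw [hφfun]
    refine hsub.congr_deriv (Eq.symm ?_)
    have hxsq : Real.sqrt x * Real.sqrt x = x := Real.mul_self_sqrt hx.le
    rw [eq_div_iff hsx.ne']
    linear_combination (g' (x * (1 + l)) - g' (x * l)) * hxsq
  -- the derivative is negative
  have hderivneg : ∀ l : ℝ, 0 < l →
      Real.sqrt x * (g' (x * (1 + l)) - g' (x * l)) < 0 := by
    intro l hl
    have ha : 0 < x * l := mul_pos hx hl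
    have hab : x * l < x * (1 + l) := by nlinarith
    have := hg'anti _ _ ha hab
    apply mul_neg_of_pos_of_neg hsx
    linarith
  -- φ is strictly decreasing on [0, ∞)
  have hφcont : ContinuousOn φ (Set.Ici (0:ℝ)) := by
    have ctanh : Continuous Real.tanh :=
      continuous_iff_continuousAt.2 fun y => (my_hasDerivAt_tanh y).continuousAt
    have cg : Continuous g := by
      rw [hgfun]
      exact Real.continuous_sqrt.comp (continuous_id.mul ctanh)
    rw [hφfun]
    exact (((cg.comp (continuous_const.mul (continuous_const.add continuous_id))).sub
      (cg.comp (continuous_const.mul continuous_id))).div_const _).sub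
      continuous_const |>.continuousOn
  have hφanti : StrictAntiOn φ (Set.Ici (0:ℝ)) := by
    apply strictAntiOn_of_deriv_neg (convex_Ici 0) hφcont
    intro y hy
    rw [interior_Ici] at hy
    rw [(hφderiv y hy).deriv]
    exact hderivneg y hy
  refine ⟨hφ0, fun l hl => ⟨hφderiv l hl, hderivneg l hl, ?_⟩⟩
  have := hφanti (Set.self_mem_Ici) (Set.mem_Ici.2 hl.le) hl
  rwa [hφ0] at this
end
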